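/- Let 0 < d < n, 0 < r_m < R. Then sup over |x| ≤ r_m/2 of the integral over {y ∈ ℝⁿ : r_m ≤ |y| ≤ R} of |y|^(−d)·| |x−y|^(d−n) − |y|^(d−n) | dy is bounded by a constant C depending only on n, d, R (independent of r_m and x). -/

import Mathlib

open MeasureTheory Set Metric

lemma aux_mvt {p : ℝ} (hp : p < 0) {m s t : ℝ} (hm : 0 < m) (hms : m ≤ s) (hmt : m ≤ t)
    (hst : s ≤ t) : |s ^ p - t ^ p| ≤ (-p) * m ^ (p - 1) * |s - t| := by
  rcases eq_or_lt_of_le hst with rfl | h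
  · simp
  · have hs0 : 0 < s := lt_of_lt_of_le hm hms
    obtain ⟨c, hc, hc'⟩ := exists_hasDerivAt_eq_slope (fun x => x ^ p)
      (fun x => p * x ^ (p - 1)) h
      (by
        apply ContinuousOn.rpow_const continuousOn_id
        intro x hx
        exact Or.inl (lt_of_lt_of_le hs0 hx.1).ne')
      (fun x hx => Real.hasDerivAt_rpow_const (Or.inl (lt_of_lt_of_le hm (hms.trans hx.1.le)).ne'))
    have hc0 : 0 < c := lt_of_lt_of_le hm (hms.trans hc.1.le)
    have heq : t ^ p - s ^ p = p * c ^ (p - 1) * (t - s) :=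
      (div_eq_iff (by linarith : t - s ≠ 0)).mp hc'.symm
    have h1 : |p| = -p := abs_of_neg hp
    have h2 : |c ^ (p-1)| = c ^ (p-1) := abs_of_pos (Real.rpow_pos_of_pos hc0 _)
    have h3 : c ^ (p-1) ≤ m ^ (p-1) :=
      Real.rpow_le_rpow_of_nonpos hm (hms.trans hc.1.le) (by linarith)
    have hnp : (0:ℝ) ≤ -p := by linarith
    calc |s ^ p - t ^ p| = -p * c ^ (p-1) * (t - s) := by
          rw [abs_sub_comm, heq, abs_mul, abs_mul, h1, h2,
            abs_of_nonneg (by linarith : (0:ℝ) ≤ t - s)]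
      _ ≤ -p * m ^ (p-1) * (t - s) :=
          mul_le_mul_of_nonneg_right (mul_le_mul_of_nonneg_left h3 hnp) (by linarith)
      _ = -p * m ^ (p-1) * |s - t| := by
          rw [abs_sub_comm, abs_of_nonneg (by linarith : (0:ℝ) ≤ t - s)]

lemma aux_mvt' {p : ℝ} (hp : p < 0) {m s t : ℝ} (hm : 0 < m) (hms : m ≤ s) (hmt : m ≤ t) :
    |s ^ p - t ^ p| ≤ (-p) * m ^ (p - 1) * |s - t| := by
  rcases le_total s t with h | h
  · exact aux_mvt hp hm hms hmt h
  · rw [abs_sub_comm, abs_sub_comm s t]; exact aux_mvt hp hm hmt hms h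

theorem stmt_4 (n : ℕ) (d R : ℝ) (hd0 : 0 < d) (hdn : d < n) (hR : 0 < R) :
    ∃ C : ℝ, ∀ (rm : ℝ), 0 < rm → rm < R →
      ∀ x : EuclideanSpace ℝ (Fin n), ‖x‖ ≤ rm / 2 →
      (∫ y in {y : EuclideanSpace ℝ (Fin n) | rm ≤ ‖y‖ ∧ ‖y‖ ≤ R},
          ‖y‖ ^ (-d) * |‖x - y‖ ^ (d - n) - ‖y‖ ^ (d - n)|) ≤ C := by
  set E := EuclideanSpace ℝ (Fin n)
  have hn1 : 1 ≤ n := by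
    by_contra h
    push_neg at h
    interval_cases n <;> simp_all <;> linarith
  haveI : Nontrivial E := Module.nontrivial_of_finrank_pos (R := ℝ)
    (by rw [finrank_euclideanSpace_fin]; omega)
  set vb : ℝ := (volume (ball (0:E) 1)).toReal with hvb
  have hvb0 : 0 ≤ vb := ENNReal.toReal_nonneg
  set K : ℝ := ((n:ℝ) - d) * 2 ^ ((n:ℝ) - d) with hK
  have hK0 : 0 < K := by
    apply mul_pos (by linarith) (Real.rpow_pos_of_pos two_pos _)
  refine ⟨K * ((n:ℝ) * vb), ?_⟩
  intro rm hrm hrmR x hx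
  set S : Set E := {y : E | rm ≤ ‖y‖ ∧ ‖y‖ ≤ R} with hS
  have hSeq : S = closedBall (0:E) R ∩ (ball (0:E) rm)ᶜ := by
    ext y
    simp [hS, mem_closedBall, mem_ball, dist_eq_norm, not_lt, and_comm]
  have hSm : MeasurableSet S := by
    rw [hSeq]
    exact (measurableSet_closedBall).inter (measurableSet_ball).compl
  have hScpt : IsCompact S := by
    rw [hSeq]
    exact (isCompact_closedBall _ _).inter_right (isOpen_ball.isClosed_compl)
  -- positivity facts on S
  have hy_facts : ∀ y ∈ S, 0 < ‖y‖ ∧ rm / 2 ≤ ‖x - y‖ := by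
    intro y hy
    obtain ⟨h1, h2⟩ := hy
    have hy0 : 0 < ‖y‖ := lt_of_lt_of_le hrm h1
    refine ⟨hy0, ?_⟩
    have := abs_norm_sub_norm_le (x - y) (-y)
    simp only [sub_neg_eq_add, sub_add_cancel, norm_neg] at this
    have h3 : ‖y‖ - ‖x - y‖ ≤ ‖x‖ := by
      have := abs_le.mp this
      linarith [this.1]
    linarith
  -- pointwise bound
  set g : E → ℝ := fun y => (K * rm) * ‖y‖ ^ (-(n:ℝ) - 1) with hg
  have hfg : ∀ y ∈ S, ‖y‖ ^ (-d) * |‖x - y‖ ^ (d - n) - ‖y‖ ^ (d - n)| ≤ g y := by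
    intro y hy
    obtain ⟨hy0, hxy⟩ := hy_facts y hy
    obtain ⟨h1, h2⟩ := hy
    have hm : (0:ℝ) < ‖y‖ / 2 := by linarith
    have hms : ‖y‖ / 2 ≤ ‖x - y‖ := by
      have : rm / 2 ≤ ‖x - y‖ := hxy
      have h4 := abs_norm_sub_norm_le (x - y) (-y)
      simp only [sub_neg_eq_add, sub_add_cancel, norm_neg] at h4
      have := abs_le.mp h4
      linarith [this.1]
    have hmvt := aux_mvt' (p := d - n) (m := ‖y‖/2) (s := ‖x - y‖) (t := ‖y‖) (by linarith) hm hms (by linarith)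
    have habs : |‖x - y‖ - ‖y‖| ≤ rm / 2 := by
      have h4 := abs_norm_sub_norm_le (x - y) (-y)
      simp only [sub_neg_eq_add, sub_add_cancel, norm_neg] at h4
      linarith
    have hstep : |‖x - y‖ ^ (d - n) - ‖y‖ ^ (d - n)| ≤
        ((n:ℝ) - d) * (‖y‖ / 2) ^ (d - (n:ℝ) - 1) * (rm / 2) := by
      have := hmvt
      have hnd : -(d - (n:ℝ)) = (n:ℝ) - d := by ring
      calc |‖x - y‖ ^ (d - ↑n) - ‖y‖ ^ (d - ↑n)|
          ≤ -(d - (n:ℝ)) * (‖y‖/2) ^ (d - (n:ℝ) - 1) * |‖x - y‖ - ‖y‖| := hmvt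
        _ ≤ ((n:ℝ) - d) * (‖y‖/2) ^ (d - (n:ℝ) - 1) * (rm / 2) := by
            rw [hnd]
            exact mul_le_mul_of_nonneg_left habs
              (mul_nonneg (by linarith) (Real.rpow_pos_of_pos hm _).le)
    have hkey : ‖y‖ ^ (-d) * (((n:ℝ) - d) * (‖y‖ / 2) ^ (d - (n:ℝ) - 1) * (rm / 2)) = g y := by
      rw [hg, hK]
      rw [Real.div_rpow (norm_nonneg y) (by norm_num)]
      rw [show (2:ℝ) ^ (d - (n:ℝ) - 1) = 2 ^ (d - (n:ℝ)) / 2 by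
        rw [Real.rpow_sub two_pos, Real.rpow_one]]
      have h2p : (0:ℝ) < 2 ^ (d - (n:ℝ)) := Real.rpow_pos_of_pos two_pos _
      have hprod : (2:ℝ) ^ ((n:ℝ) - d) * 2 ^ (d - (n:ℝ)) = 1 := by
        rw [← Real.rpow_add two_pos]
        norm_num
      have hyy : ‖y‖ ^ (-d) * ‖y‖ ^ (d - (n:ℝ) - 1) = ‖y‖ ^ (-(n:ℝ) - 1) := by
        rw [← Real.rpow_add hy0]
        congr 1
        ring
      show _ = _ * _ * _ * _
      rw [eq_inv_of_mul_eq_one_left hprod, ← hyy]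
      field_simp
    calc ‖y‖ ^ (-d) * |‖x - y‖ ^ (d - n) - ‖y‖ ^ (d - n)|
        ≤ ‖y‖ ^ (-d) * (((n:ℝ) - d) * (‖y‖ / 2) ^ (d - (n:ℝ) - 1) * (rm / 2)) :=
          mul_le_mul_of_nonneg_left hstep (Real.rpow_pos_of_pos hy0 _).le
      _ = g y := hkey
  -- continuity / integrability
  have hnorm_ne : ∀ y ∈ S, ‖y‖ ≠ 0 := fun y hy => (hy_facts y hy).1.ne'
  have hc1 : ContinuousOn (fun y : E => ‖y‖ ^ (-d)) S :=
    continuous_norm.continuousOn.rpow_const (fun y hy => Or.inl (hnorm_ne y hy))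
  have hc2 : ContinuousOn (fun y : E => ‖x - y‖ ^ (d - (n:ℝ))) S :=
    ((continuous_const.sub continuous_id).norm.continuousOn).rpow_const
      (fun y hy => Or.inl (by
        have h := (hy_facts y hy).2
        exact (lt_of_lt_of_le (by linarith : (0:ℝ) < rm/2) h).ne'))
  have hc3 : ContinuousOn (fun y : E => ‖y‖ ^ (d - (n:ℝ))) S :=
    continuous_norm.continuousOn.rpow_const (fun y hy => Or.inl (hnorm_ne y hy))
  have hcf : ContinuousOn
      (fun y : E => ‖y‖ ^ (-d) * |‖x - y‖ ^ (d - n) - ‖y‖ ^ (d - n)|) S :=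
    hc1.mul ((hc2.sub hc3).abs)
  have hcg : ContinuousOn g S :=
    continuousOn_const.mul (continuous_norm.continuousOn.rpow_const
      (fun y hy => Or.inl (hnorm_ne y hy)))
  have hintf : IntegrableOn
      (fun y : E => ‖y‖ ^ (-d) * |‖x - y‖ ^ (d - n) - ‖y‖ ^ (d - n)|) S volume :=
    hcf.integrableOn_compact hScpt
  have hintg : IntegrableOn g S volume := hcg.integrableOn_compact hScpt
  have step1 : (∫ y in S, ‖y‖ ^ (-d) * |‖x - y‖ ^ (d - n) - ‖y‖ ^ (d - n)|)
      ≤ ∫ y in S, g y := setIntegral_mono_on hintf hintg hSm hfg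
  -- compute ∫ g
  have hI : (∫ y in S, ‖y‖ ^ (-(n:ℝ) - 1))
      = (n:ℝ) * vb * (∫ r in Set.Ioi (0:ℝ), r ^ (n - 1) •
        (Set.Icc rm R).indicator (fun r : ℝ => r ^ (-(n:ℝ) - 1)) r) := by
    have h1 : (∫ y in S, ‖y‖ ^ (-(n:ℝ) - 1))
        = ∫ y : E, (Set.Icc rm R).indicator (fun r : ℝ => r ^ (-(n:ℝ) - 1)) ‖y‖ := by
      rw [← integral_indicator hSm]
      apply integral_congr_ae
      filter_upwards with y
      by_cases hy : y ∈ S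
      · obtain ⟨ha, hb⟩ := id hy
        rw [Set.indicator_of_mem hy, Set.indicator_of_mem (Set.mem_Icc.mpr ⟨ha, hb⟩)]
      · rw [Set.indicator_of_notMem hy, Set.indicator_of_notMem (by
          intro h
          exact hy ⟨(Set.mem_Icc.mp h).1, (Set.mem_Icc.mp h).2⟩)]
    rw [h1, integral_fun_norm_addHaar volume
      (fun r : ℝ => (Set.Icc rm R).indicator (fun r : ℝ => r ^ (-(n:ℝ) - 1)) r)]
    rw [finrank_euclideanSpace_fin]
    simp [nsmul_eq_mul, smul_eq_mul, mul_assoc]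
    exact Or.inl (Or.inl rfl)
  have hJ : (∫ r in Set.Ioi (0:ℝ), r ^ (n - 1) •
      (Set.Icc rm R).indicator (fun r : ℝ => r ^ (-(n:ℝ) - 1)) r) = rm⁻¹ - R⁻¹ := by
    have h1 : (fun r : ℝ => r ^ (n - 1) •
        (Set.Icc rm R).indicator (fun r : ℝ => r ^ (-(n:ℝ) - 1)) r)
        = (Set.Icc rm R).indicator (fun r : ℝ => r ^ (n - 1) * r ^ (-(n:ℝ) - 1)) := by
      funext r
      by_cases hr : r ∈ Set.Icc rm R <;>
        simp [Set.indicator_of_mem, Set.indicator_of_notMem, hr]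
    rw [h1, setIntegral_indicator measurableSet_Icc]
    have h2 : Set.Ioi (0:ℝ) ∩ Set.Icc rm R = Set.Icc rm R := by
      apply Set.inter_eq_self_of_subset_right
      intro r hr
      exact lt_of_lt_of_le hrm (Set.mem_Icc.mp hr).1
    rw [h2]
    have h3 : ∀ r ∈ Set.Icc rm R, r ^ (n - 1) * r ^ (-(n:ℝ) - 1) = r ^ (-2 : ℝ) := by
      intro r hr
      have hr0 : 0 < r := lt_of_lt_of_le hrm (Set.mem_Icc.mp hr).1
      rw [← Real.rpow_natCast r (n - 1), ← Real.rpow_add hr0]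
      congr 1
      rw [Nat.cast_sub hn1]
      push_cast
      ring
    rw [setIntegral_congr_fun measurableSet_Icc h3]
    rw [MeasureTheory.integral_Icc_eq_integral_Ioc,
      ← intervalIntegral.integral_of_le hrmR.le]
    rw [integral_rpow (Or.inr ⟨by norm_num, by
      rw [Set.uIcc_of_le hrmR.le]
      intro h
      exact absurd (Set.mem_Icc.mp h).1 (by linarith)⟩)]
    norm_num
    rw [Real.rpow_neg_one, Real.rpow_neg_one]
    ring
  have step2 : (∫ y in S, g y) = K * rm * ((n:ℝ) * vb * (rm⁻¹ - R⁻¹)) := by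
    rw [hg]
    simp only
    rw [MeasureTheory.integral_const_mul, hI, hJ]
  have step3 : K * rm * ((n:ℝ) * vb * (rm⁻¹ - R⁻¹)) ≤ K * ((n:ℝ) * vb) := by
    have hrminv : rm * (rm⁻¹ - R⁻¹) ≤ 1 := by
      have h1 : rm * rm⁻¹ = 1 := mul_inv_cancel₀ hrm.ne'
      have h2 : 0 ≤ rm * R⁻¹ := by positivity
      nlinarith
    have hnvb : 0 ≤ (n:ℝ) * vb := by positivity
    calc K * rm * ((n:ℝ) * vb * (rm⁻¹ - R⁻¹))
        = (K * ((n:ℝ) * vb)) * (rm * (rm⁻¹ - R⁻¹)) := by ring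
      _ ≤ (K * ((n:ℝ) * vb)) * 1 :=
          mul_le_mul_of_nonneg_left hrminv (mul_nonneg hK0.le hnvb)
      _ = K * ((n:ℝ) * vb) := mul_one _
  calc (∫ y in S, ‖y‖ ^ (-d) * |‖x - y‖ ^ (d - n) - ‖y‖ ^ (d - n)|)
      ≤ ∫ y in S, g y := step1
    _ = K * rm * ((n:ℝ) * vb * (rm⁻¹ - R⁻¹)) := step2
    _ ≤ K * ((n:ℝ) * vb) := step3
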